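/- For all positive integers p and n, (1/n!)·Σ_{j=1}^{n} s(n,j)·C(j,p) = Σ_{j=1}^{n} s(j,p)/j!, and both sides equal (1/n!)·s(n+1, p+1). -/

import Mathlib

/-- Unsigned Stirling numbers of the first kind. -/
def stirling1 : ℕ → ℕ → ℕ
  | 0, 0 => 1
  | 0, _ + 1 => 0
  | _ + 1, 0 => 0
  | n + 1, k + 1 => stirling1 n k + n * stirling1 n (k + 1)

/-- Stirling numbers of the second kind. -/
def stirling2 : ℕ → ℕ → ℕ
  | 0, 0 => 1
  | 0, _ + 1 => 0
  | _ + 1, 0 => 0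
  | n + 1, k + 1 => stirling2 n k + (k + 1) * stirling2 n (k + 1)

lemma stirling1_eq_zero : ∀ n k, n < k → stirling1 n k = 0
  | 0, 0, h => by omega
  | 0, _+1, _ => rfl
  | n+1, 0, h => by omega
  | n+1, k+1, h => by
    simp [stirling1, stirling1_eq_zero n k (by omega),
      stirling1_eq_zero n (k+1) (by omega)]

lemma keyA (n : ℕ) : ∀ p, ∑ j ∈ Finset.range (n+1), stirling1 n j * j.choose p
    = stirling1 (n+1) (p+1) := by
  induction n with
  | zero => intro p; cases p <;> simp [stirling1]
  | succ n ih =>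
    intro p
    have h0 : ∑ j ∈ Finset.range (n+2), stirling1 (n+1) j * j.choose p
        = ∑ j ∈ Finset.range (n+1), stirling1 (n+1) (j+1) * (j+1).choose p := by
      rw [Finset.sum_range_succ']; simp [stirling1]
    rw [h0]
    have hrec : ∀ j, stirling1 (n+1) (j+1) = stirling1 n j + n * stirling1 n (j+1) :=
      fun j => rfl
    simp only [hrec, add_mul]
    rw [Finset.sum_add_distrib]
    cases p with
    | zero =>
      simp only [Nat.choose_zero_right, mul_one]
      have h1 : ∑ j ∈ Finset.range (n+1), stirling1 n j = stirling1 (n+1) 1 := by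
        simpa using ih 0
      have h2 : (∑ j ∈ Finset.range (n+1), stirling1 n (j+1)) + stirling1 n 0
          = stirling1 (n+1) 1 := by
        have h := Finset.sum_range_succ' (fun j => stirling1 n j) (n+1)
        rw [Finset.sum_range_succ, stirling1_eq_zero n (n+1) (by omega)] at h
        omega
      have hn0 : n * stirling1 n 0 = 0 := by cases n <;> simp [stirling1]
      have h3 : n * ∑ j ∈ Finset.range (n+1), stirling1 n (j+1)
          = n * stirling1 (n+1) 1 := by
        rw [← h2, Nat.mul_add, hn0]; simp
      rw [h1, ← Finset.mul_sum, h3]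
      have : stirling1 (n+2) 1 = (n+1) * stirling1 (n+1) 1 := by
        simp [stirling1]
      rw [this]; ring
    | succ q =>
      have hsplit : ∀ j, stirling1 n j * (j+1).choose (q+1)
          = stirling1 n j * j.choose q + stirling1 n j * j.choose (q+1) := by
        intro j; rw [Nat.choose_succ_succ]; ring
      have hshift : ∑ j ∈ Finset.range (n+1), stirling1 n (j+1) * (j+1).choose (q+1)
          = stirling1 (n+1) (q+2) := by
        have h := Finset.sum_range_succ'
          (fun j => stirling1 n j * j.choose (q+1)) (n+1)
        rw [Finset.sum_range_succ, stirling1_eq_zero n (n+1) (by omega)] at h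
        simp only [zero_mul, add_zero, Nat.choose_zero_succ, mul_zero] at h
        rw [ih (q+1)] at h
        exact h.symm
      have hfirst : ∑ j ∈ Finset.range (n+1), stirling1 n j * (j+1).choose (q+1)
          = stirling1 (n+1) (q+1) + stirling1 (n+1) (q+2) := by
        simp only [hsplit]
        rw [Finset.sum_add_distrib, ih q, ih (q+1)]
      have hsecond : ∑ j ∈ Finset.range (n+1), n * stirling1 n (j+1) * (j+1).choose (q+1)
          = n * stirling1 (n+1) (q+2) := by
        have : ∀ j, n * stirling1 n (j+1) * (j+1).choose (q+1)
            = n * (stirling1 n (j+1) * (j+1).choose (q+1)) := fun j => by ring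
        simp only [this]
        rw [← Finset.mul_sum, hshift]
      rw [hfirst, hsecond]
      have : stirling1 (n+2) (q+2) = stirling1 (n+1) (q+1) + (n+1) * stirling1 (n+1) (q+2) :=
        rfl
      rw [this]; ring

lemma keyB (p : ℕ) (hp : 1 ≤ p) : ∀ n, 1 ≤ n →
    (stirling1 (n+1) (p+1) : ℚ) / n.factorial
      = ∑ j ∈ Finset.Icc 1 n, (stirling1 j p : ℚ) / j.factorial := by
  intro n
  induction n with
  | zero => omega
  | succ n ih =>
    intro _
    rcases Nat.eq_zero_or_pos n with rfl | hn
    · obtain ⟨q, rfl⟩ := Nat.exists_eq_add_of_le hp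
      simp [stirling1, stirling1_eq_zero 0 (1+q) (by omega)]
    · rw [Finset.sum_Icc_succ_top (by omega), ← ih hn]
      have hrec : (stirling1 (n+2) (p+1) : ℚ)
          = stirling1 (n+1) p + (n+1) * stirling1 (n+1) (p+1) := by
        push_cast [show stirling1 (n+2) (p+1)
          = stirling1 (n+1) p + (n+1) * stirling1 (n+1) (p+1) from rfl]
        ring
      rw [hrec]
      have h1 : ((n+1).factorial : ℚ) = (n+1) * n.factorial := by
        push_cast [Nat.factorial_succ]; ring
      have h2 : (n.factorial : ℚ) ≠ 0 := Nat.cast_ne_zero.2 n.factorial_ne_zero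
      have h3 : ((n:ℚ)+1) ≠ 0 := by positivity
      rw [h1]
      field_simp
      ring


open scoped BigOperators
theorem stmt_8 (p n : ℕ) (hp : 1 ≤ p) (hn : 1 ≤ n) :
    (1 / (n.factorial : ℚ)) * (∑ j ∈ Finset.Icc 1 n, (stirling1 n j : ℚ) * (j.choose p : ℚ)) =
        ∑ j ∈ Finset.Icc 1 n, (stirling1 j p : ℚ) / (j.factorial : ℚ) ∧
      (1 / (n.factorial : ℚ)) * (∑ j ∈ Finset.Icc 1 n, (stirling1 n j : ℚ) * (j.choose p : ℚ)) =
        (stirling1 (n + 1) (p + 1) : ℚ) / (n.factorial : ℚ) := by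
  have hN : ∑ j ∈ Finset.Icc 1 n, stirling1 n j * j.choose p = stirling1 (n+1) (p+1) := by
    have h := keyA n p
    have hins : Finset.range (n+1) = insert 0 (Finset.Icc 1 n) := by
      ext x; simp [Finset.mem_range, Finset.mem_Icc]; omega
    rw [hins, Finset.sum_insert (by simp)] at h
    rw [Nat.choose_eq_zero_of_lt (by omega), mul_zero, zero_add] at h
    exact h
  have hsum : (∑ j ∈ Finset.Icc 1 n, (stirling1 n j : ℚ) * (j.choose p : ℚ))
      = (stirling1 (n+1) (p+1) : ℚ) := by exact_mod_cast congrArg (Nat.cast (R := ℚ)) hN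
  constructor
  · rw [hsum, ← keyB p hp n hn]; ring
  · rw [hsum]; ring
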